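/- Let Θ ⊂ ℝ^k be closed, convex, nonempty, R : ℝ^k → ℝ be μ-strongly convex and K-smooth with minimizer θ* ∈ Θ, and let g be a random vector with E[g] = ∇R(θ) and E‖g‖² ≤ 2K(R(θ) - R(θ*)) + A for some A ≥ 0. Then for θ⁺ = Π_Θ(θ - γg) with step size 0 < γ ≤ 1/(2K), it holds that E‖θ⁺ - θ*‖² ≤ (1-γμ)‖θ - θ*‖² - γ(R(θ) - R(θ*)) + γ²A, where Π_Θ is the Euclidean projection onto Θ. -/

import Mathlib

open MeasureTheory RealInnerProductSpace

set_option maxHeartbeats 1000000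

/-- one-step SGD progress bound. Let `Θ ⊂ ℝ^k` be closed, convex,
nonempty, `R` be `μ`-strongly convex and `K`-smooth with (global) minimizer
`θ* ∈ Θ`, and `g` a random vector with `E[g] = ∇R(θ)` and
`E‖g‖² ≤ 2K(R(θ) - R(θ*)) + A`. Then for `θ⁺ = Π_Θ(θ - γ g)` with
`0 < γ ≤ 1/(2K)`, `E‖θ⁺ - θ*‖² ≤ (1-γμ)‖θ - θ*‖² - γ(R(θ) - R(θ*)) + γ²A`,
where `Π_Θ` is the Euclidean (metric) projection onto `Θ`. -/
theorem sgd_one_step (k : ℕ) (μ K A γ : ℝ) (hμ : 0 < μ) (hK : 0 < K)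
    (hA : 0 ≤ A) (hγ : 0 < γ) (hγK : γ ≤ 1 / (2 * K))
    (Θ : Set (EuclideanSpace ℝ (Fin k))) (hΘne : Θ.Nonempty)
    (hΘcl : IsClosed Θ) (hΘcv : Convex ℝ Θ)
    (R : EuclideanSpace ℝ (Fin k) → ℝ)
    (hsc : ∀ u v, (inner ℝ (gradient R v) (u - v) : ℝ) + μ / 2 * ‖u - v‖ ^ 2
      ≤ R u - R v)
    (hsm : ∀ u v, ‖gradient R u - gradient R v‖ ≤ K * ‖u - v‖)
    (θstar : EuclideanSpace ℝ (Fin k)) (hθstar : θstar ∈ Θ)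
    (hmin : ∀ u, R θstar ≤ R u)
    (proj : EuclideanSpace ℝ (Fin k) → EuclideanSpace ℝ (Fin k))
    (hproj : ∀ z, proj z ∈ Θ ∧ ∀ u ∈ Θ, ‖proj z - z‖ ≤ ‖u - z‖)
    (Ω : Type*) [MeasureSpace Ω] (P : Measure Ω) [IsProbabilityMeasure P]
    (g : Ω → EuclideanSpace ℝ (Fin k)) (hgInt : Integrable g P)
    (hg2Int : Integrable (fun ω => ‖g ω‖ ^ 2) P)
    (θ : EuclideanSpace ℝ (Fin k))
    (hmean : ∫ ω, g ω ∂P = gradient R θ)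
    (hvar : ∫ ω, ‖g ω‖ ^ 2 ∂P ≤ 2 * K * (R θ - R θstar) + A) :
    ∫ ω, ‖proj (θ - γ • g ω) - θstar‖ ^ 2 ∂P
      ≤ (1 - γ * μ) * ‖θ - θstar‖ ^ 2 - γ * (R θ - R θstar) + γ ^ 2 * A := by
  -- variational inequality for the projection
  have hVI : ∀ z, ∀ u ∈ Θ, ⟪z - proj z, u - proj z⟫ ≤ 0 := by
    intro z
    have hmem := (hproj z).1
    haveI : Nonempty Θ := ⟨⟨proj z, hmem⟩⟩
    have hinf : ‖z - proj z‖ = ⨅ w : Θ, ‖z - w‖ := by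
      apply le_antisymm
      · apply le_ciInf
        rintro ⟨w, hw⟩
        simpa [norm_sub_rev] using (hproj z).2 w hw
      · exact ciInf_le ⟨0, fun _ ⟨_, h⟩ => h ▸ norm_nonneg _⟩ (⟨proj z, hmem⟩ : Θ)
    exact (norm_eq_iInf_iff_real_inner_le_zero hΘcv hmem).mp hinf
  -- nonexpansiveness at θstar (squared)
  have hne : ∀ z, ‖proj z - θstar‖ ^ 2 ≤ ‖z - θstar‖ ^ 2 := by
    intro z
    have h1 : ⟪z - proj z, θstar - proj z⟫ ≤ 0 := hVI z θstar hθstar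
    have h2 : ‖proj z - θstar‖ ^ 2 ≤ ⟪z - θstar, proj z - θstar⟫ := by
      have e1 : ⟪z - θstar, proj z - θstar⟫ - ‖proj z - θstar‖ ^ 2
          = -⟪z - proj z, θstar - proj z⟫ := by
        rw [← real_inner_self_eq_norm_sq]
        have : (z - θstar) - (proj z - θstar) = z - proj z := by abel
        rw [← inner_sub_left, this, ← inner_neg_right]
        congr 1
        abel
      linarith
    have h3 := real_inner_le_norm (z - θstar) (proj z - θstar)
    nlinarith [norm_nonneg (proj z - θstar), norm_nonneg (z - θstar),
      sq_nonneg (‖proj z - θstar‖ - ‖z - θstar‖)]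
  -- proj is 1-Lipschitz, hence continuous
  have hLip : LipschitzWith 1 proj := by
    rw [lipschitzWith_iff_dist_le_mul]
    intro z₁ z₂
    have h1 := hVI z₁ (proj z₂) (hproj z₂).1
    have h2 := hVI z₂ (proj z₁) (hproj z₁).1
    have key : ‖proj z₁ - proj z₂‖ ^ 2 ≤ ⟪z₁ - z₂, proj z₁ - proj z₂⟫ := by
      have e : ⟪z₁ - z₂, proj z₁ - proj z₂⟫ - ‖proj z₁ - proj z₂‖ ^ 2
          = -⟪z₁ - proj z₁, proj z₂ - proj z₁⟫ - ⟪z₂ - proj z₂, proj z₁ - proj z₂⟫ := by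
        rw [← real_inner_self_eq_norm_sq, ← inner_sub_left]
        have e2 : (z₁ - z₂) - (proj z₁ - proj z₂) = (z₁ - proj z₁) - (z₂ - proj z₂) := by abel
        rw [e2, inner_sub_left, ← inner_neg_right (𝕜 := ℝ) (x := z₁ - proj z₁)]
        congr 1
        congr 1
        abel
      linarith
    have h3 := real_inner_le_norm (z₁ - z₂) (proj z₁ - proj z₂)
    rw [dist_eq_norm, dist_eq_norm, NNReal.coe_one, one_mul]
    have h4 : ‖proj z₁ - proj z₂‖ ^ 2 ≤ ‖z₁ - z₂‖ ^ 2 := by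
      nlinarith [sq_nonneg (‖proj z₁ - proj z₂‖ - ‖z₁ - z₂‖)]
    exact (pow_le_pow_iff_left₀ (norm_nonneg _) (norm_nonneg _) two_ne_zero).mp h4
  -- integrability of the upper bound
  have heq : ∀ ω, ‖θ - γ • g ω - θstar‖ ^ 2
      = ‖θ - θstar‖ ^ 2 - 2 * γ * ⟪θ - θstar, g ω⟫ + γ ^ 2 * ‖g ω‖ ^ 2 := by
    intro ω
    have e : θ - γ • g ω - θstar = (θ - θstar) - γ • g ω := by abel
    rw [e, norm_sub_sq_real, real_inner_smul_right, norm_smul]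
    simp [abs_of_pos hγ, mul_pow]
    ring
  have hiInt : Integrable (fun ω => ⟪θ - θstar, g ω⟫) P := hgInt.const_inner _
  have hbInt : Integrable (fun ω => ‖θ - γ • g ω - θstar‖ ^ 2) P := by
    simp only [heq]
    exact ((integrable_const _).sub ((hiInt.const_mul _))).add (hg2Int.const_mul _)
  -- integrability / measurability of the LHS
  have hcont : Continuous fun z : EuclideanSpace ℝ (Fin k) =>
      ‖proj (θ - γ • z) - θstar‖ ^ 2 := by
    apply Continuous.pow
    exact ((hLip.continuous.comp
      (continuous_const.sub (continuous_id.const_smul γ))).sub continuous_const).norm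
  have hmeas : AEStronglyMeasurable
      (fun ω => ‖proj (θ - γ • g ω) - θstar‖ ^ 2) P :=
    hcont.comp_aestronglyMeasurable hgInt.1
  have hInt : Integrable (fun ω => ‖proj (θ - γ • g ω) - θstar‖ ^ 2) P := by
    refine hbInt.mono hmeas (Filter.Eventually.of_forall fun ω => ?_)
    have h := hne (θ - γ • g ω)
    rw [Real.norm_eq_abs, Real.norm_eq_abs, abs_of_nonneg (by positivity),
      abs_of_nonneg (by positivity)]
    exact h
  -- step 1: compare to the unprojected point
  have step1 : ∫ ω, ‖proj (θ - γ • g ω) - θstar‖ ^ 2 ∂P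
      ≤ ∫ ω, ‖θ - γ • g ω - θstar‖ ^ 2 ∂P :=
    integral_mono hInt hbInt fun ω => hne (θ - γ • g ω)
  -- step 2: compute the integral of the bound
  have step2 : ∫ ω, ‖θ - γ • g ω - θstar‖ ^ 2 ∂P
      = ‖θ - θstar‖ ^ 2 - 2 * γ * ⟪θ - θstar, gradient R θ⟫
        + γ ^ 2 * ∫ ω, ‖g ω‖ ^ 2 ∂P := by
    have hinner : ∫ ω, ⟪θ - θstar, g ω⟫ ∂P = ⟪θ - θstar, gradient R θ⟫ := by
      rw [← hmean]; exact integral_inner hgInt _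
    have e1 : (fun ω => ‖θ - γ • g ω - θstar‖ ^ 2) = fun ω =>
        ‖θ - θstar‖ ^ 2 + ((-2 * γ) * ⟪θ - θstar, g ω⟫ + γ ^ 2 * ‖g ω‖ ^ 2) := by
      funext ω; rw [heq ω]; ring
    have i2 : Integrable (fun ω => -2 * γ * ⟪θ - θstar, g ω⟫ + γ ^ 2 * ‖g ω‖ ^ 2) P :=
      (hiInt.const_mul _).add (hg2Int.const_mul _)
    rw [e1, integral_add (integrable_const _) i2,
      integral_add (hiInt.const_mul _) (hg2Int.const_mul _),
      integral_const, integral_const_mul, integral_const_mul, hinner]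
    simp [measure_univ]
    ring
  -- strong convexity at (θstar, θ)
  have hscθ := hsc θstar θ
  have hsym : ⟪θ - θstar, gradient R θ⟫ = - ⟪gradient R θ, θstar - θ⟫ := by
    rw [real_inner_comm, ← inner_neg_right]
    congr 1
    abel
  have hns : ‖θstar - θ‖ = ‖θ - θstar‖ := norm_sub_rev _ _
  have hΔ : 0 ≤ R θ - R θstar := by linarith [hmin θ]
  have hvar' : γ ^ 2 * ∫ ω, ‖g ω‖ ^ 2 ∂P ≤ γ ^ 2 * (2 * K * (R θ - R θstar) + A) :=
    mul_le_mul_of_nonneg_left hvar (by positivity)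
  have hγ2K : γ * (2 * K) ≤ 1 := by
    rw [div_eq_mul_inv, one_mul] at hγK
    calc γ * (2 * K) ≤ (2 * K)⁻¹ * (2 * K) := by
          apply mul_le_mul_of_nonneg_right hγK (by positivity)
      _ = 1 := by field_simp
  calc ∫ ω, ‖proj (θ - γ • g ω) - θstar‖ ^ 2 ∂P
      ≤ ‖θ - θstar‖ ^ 2 - 2 * γ * ⟪θ - θstar, gradient R θ⟫
        + γ ^ 2 * ∫ ω, ‖g ω‖ ^ 2 ∂P := by rw [← step2]; exact step1
    _ ≤ (1 - γ * μ) * ‖θ - θstar‖ ^ 2 - γ * (R θ - R θstar) + γ ^ 2 * A := by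
        have hns2 : ‖θstar - θ‖ ^ 2 = ‖θ - θstar‖ ^ 2 := by rw [hns]
        rw [hns2] at hscθ
        nlinarith [hvar', mul_le_mul_of_nonneg_left hscθ hγ.le, hsym,
          mul_le_mul_of_nonneg_left hγ2K (mul_nonneg hγ.le hΔ)]
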